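/- Let f : ℝ → ℝ be C³ near x_m with f(x_m) = 0, f'(x_m) = 0, f''(x_m) = 2A with A > 0, and f'''(x_m) = 6B, and f(x) > 0 for x ≠ x_m near x_m. Then lim_{x → x_m^−} ( −f'(x) − 2√A √(f(x)) ) / (4 f(x)) = −B/(2A) and lim_{x → x_m^+} ( −f'(x) + 2√A √(f(x)) ) / (4 f(x)) = −B/(2A). -/

import Mathlib

open Real Topology

lemma corrector_aux (f g1 Q R : ℝ → ℝ) (xm A B : ℝ) (hA : 0 < A) (l : Filter ℝ)
    (hl : l ≤ 𝓝[≠] xm)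
    (hfpos : ∀ᶠ x in 𝓝[≠] xm, 0 < f x)
    (hN3 : Filter.Tendsto (fun x => ((g1 x)^2 - 4*A*f x)/(x-xm)^3) l (𝓝 (8*A*B)))
    (hA1 : Filter.Tendsto (fun x => f x/(x-xm)^2) l (𝓝 A))
    (hQ : Filter.Tendsto (fun x => Q x/(x-xm)) l (𝓝 (-(4*A))))
    (hRQ : ∀ x, 0 < f x → R x * Q x = (g1 x)^2 - 4*A*f x) :
    Filter.Tendsto (fun x => R x / (4 * f x)) l (𝓝 (-B/(2*A))) := by
  have hne : ∀ᶠ x in l, x ≠ xm := hl (by exact self_mem_nhdsWithin)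
  have hfpos' : ∀ᶠ x in l, 0 < f x := hl hfpos
  have hQne : ∀ᶠ x in l, Q x / (x - xm) ≠ 0 := hQ.eventually_ne (by nlinarith)
  have hden : Filter.Tendsto (fun x => 4 * (f x/(x-xm)^2) * (Q x/(x-xm))) l
      (𝓝 (4 * A * (-(4*A)))) := (tendsto_const_nhds.mul hA1).mul hQ
  have hlim : Filter.Tendsto
      (fun x => (((g1 x)^2 - 4*A*f x)/(x-xm)^3) / (4 * (f x/(x-xm)^2) * (Q x/(x-xm)))) l
      (𝓝 ((8*A*B) / (4 * A * (-(4*A))))) :=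
    hN3.div hden (by nlinarith)
  have hval : (8*A*B) / (4 * A * (-(4*A))) = -B/(2*A) := by
    field_simp
    ring
  rw [hval] at hlim
  refine hlim.congr' ?_
  filter_upwards [hne, hfpos', hQne] with x hx hf hQx
  have ht : x - xm ≠ 0 := sub_ne_zero.mpr hx
  have hQx' : Q x ≠ 0 := by
    intro h; apply hQx; rw [h]; simp
  rw [← hRQ x hf]
  field_simp

/-- Key one-sided limits in the proof of boundedness of the corrector's derivative near the
maximum point `x_m`. -/
theorem corrector_first_derivative_limits
    (f : ℝ → ℝ) (xm A B : ℝ)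
    (hreg : ContDiffAt ℝ 3 f xm)
    (hf0 : f xm = 0)
    (hf1 : deriv f xm = 0)
    (hf2 : iteratedDeriv 2 f xm = 2 * A) (hA : 0 < A)
    (hf3 : iteratedDeriv 3 f xm = 6 * B)
    (hfpos : ∀ᶠ x in 𝓝[≠] xm, 0 < f x) :
    Filter.Tendsto
        (fun x => (-(deriv f x) - 2 * Real.sqrt A * Real.sqrt (f x)) / (4 * f x))
        (𝓝[<] xm) (𝓝 (-B / (2 * A))) ∧
      Filter.Tendsto
        (fun x => (-(deriv f x) + 2 * Real.sqrt A * Real.sqrt (f x)) / (4 * f x))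
        (𝓝[>] xm) (𝓝 (-B / (2 * A))) := by
  set g1 : ℝ → ℝ := deriv f with hg1def
  set g2 : ℝ → ℝ := deriv g1 with hg2def
  set g3 : ℝ → ℝ := deriv g2 with hg3def
  have hg2xm : g2 xm = 2*A := by
    rw [← hf2]; simp [hg2def, hg1def, iteratedDeriv_succ, iteratedDeriv_one]
  have hg3xm : g3 xm = 6*B := by
    rw [← hf3]; simp [hg3def, hg2def, hg1def, iteratedDeriv_succ, iteratedDeriv_one]
  -- get an open neighborhood where f is C³
  obtain ⟨u, hu, hcd⟩ := hreg.contDiffOn le_rfl (by simp)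
  obtain ⟨v, hvu, hvo, hxv⟩ := mem_nhds_iff.mp hu
  have hcd3 : ContDiffOn ℝ 3 f v := hcd.mono hvu
  rw [show (3 : WithTop ℕ∞) = 2 + 1 by norm_num,
    contDiffOn_succ_iff_deriv_of_isOpen hvo] at hcd3
  obtain ⟨hfd, -, hcd2⟩ := hcd3
  rw [show (2 : WithTop ℕ∞) = 1 + 1 by norm_num,
    contDiffOn_succ_iff_deriv_of_isOpen hvo] at hcd2
  obtain ⟨hg1d, -, hcd1⟩ := hcd2
  rw [show (1 : WithTop ℕ∞) = 0 + 1 by norm_num,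
    contDiffOn_succ_iff_deriv_of_isOpen hvo] at hcd1
  obtain ⟨hg2d, -, hcd0⟩ := hcd1
  have hg3c : ContinuousOn g3 v := hcd0.continuousOn
  have Hf : ∀ x ∈ v, HasDerivAt f (g1 x) x :=
    fun x hx => (hfd.differentiableAt (hvo.mem_nhds hx)).hasDerivAt
  have Hg1 : ∀ x ∈ v, HasDerivAt g1 (g2 x) x :=
    fun x hx => (hg1d.differentiableAt (hvo.mem_nhds hx)).hasDerivAt
  have Hg2 : ∀ x ∈ v, HasDerivAt g2 (g3 x) x :=
    fun x hx => (hg2d.differentiableAt (hvo.mem_nhds hx)).hasDerivAt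
  have hvmem : v ∈ 𝓝 xm := hvo.mem_nhds hxv
  have hvmem' : ∀ᶠ x in 𝓝[≠] xm, x ∈ v :=
    eventually_nhdsWithin_of_eventually_nhds (Filter.eventually_of_mem hvmem fun x hx => hx)
  -- continuity facts at xm
  have hfcont : Filter.Tendsto f (𝓝 xm) (𝓝 0) := by
    have := ((Hf xm hxv).differentiableAt).continuousAt.tendsto
    rwa [hf0] at this
  have hg1cont : Filter.Tendsto g1 (𝓝 xm) (𝓝 0) := by
    have := ((Hg1 xm hxv).differentiableAt).continuousAt.tendsto
    rwa [show g1 xm = 0 from hf1] at this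
  have hg2cont : Filter.Tendsto g2 (𝓝 xm) (𝓝 (2*A)) := by
    have := ((Hg2 xm hxv).differentiableAt).continuousAt.tendsto
    rwa [hg2xm] at this
  have hg3cont : Filter.Tendsto g3 (𝓝 xm) (𝓝 (6*B)) := by
    have := (hg3c.continuousAt hvmem).tendsto
    rwa [hg3xm] at this
  -- difference quotient limits
  have H2A : Filter.Tendsto (fun x => g1 x / (x - xm)) (𝓝[≠] xm) (𝓝 (2*A)) := by
    have h := hasDerivAt_iff_tendsto_slope.mp (Hg1 xm hxv)
    rw [hg2xm] at h
    refine h.congr fun x => ?_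
    rw [slope_def_field, show g1 xm = 0 from hf1, sub_zero]
  have H6B : Filter.Tendsto (fun x => (g2 x - 2*A) / (x - xm)) (𝓝[≠] xm) (𝓝 (6*B)) := by
    have h := hasDerivAt_iff_tendsto_slope.mp (Hg2 xm hxv)
    rw [hg3xm] at h
    refine h.congr fun x => ?_
    rw [slope_def_field, hg2xm]
  have htne : ∀ᶠ x in 𝓝[≠] xm, x ≠ xm := by exact self_mem_nhdsWithin
  -- L1 : f / (x-xm)^2 → A
  have hA1 : Filter.Tendsto (fun x => f x / (x - xm)^2) (𝓝[≠] xm) (𝓝 A) := by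
    apply HasDerivAt.lhopital_zero_nhdsNE (f' := g1) (g' := fun x => 2*(x - xm))
    · filter_upwards [hvmem'] with x hx using Hf x hx
    · filter_upwards with x
      have h := ((hasDerivAt_id x).sub_const xm).pow 2
      refine h.congr_deriv ?_
      simp only [id_eq]
      push_cast
      try ring
    · filter_upwards [htne] with x hx
      simpa [sub_eq_zero] using hx
    · exact hfcont.mono_left nhdsWithin_le_nhds
    · have : Filter.Tendsto (fun x : ℝ => (x - xm)^2) (𝓝 xm) (𝓝 0) := by
        have := (by fun_prop : Continuous fun x : ℝ => (x - xm)^2).tendsto xm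
        simpa using this
      exact this.mono_left nhdsWithin_le_nhds
    · have h := H2A.div_const 2
      rw [show (2*A)/2 = A by ring] at h
      refine h.congr fun x => ?_
      rw [div_div, mul_comm]
  -- N and its derivatives
  set N : ℝ → ℝ := fun x => (g1 x)^2 - 4*A*f x with hNdef
  set N1 : ℝ → ℝ := fun x => 2*g1 x*g2 x - 4*A*g1 x with hN1def
  set N2 : ℝ → ℝ := fun x => 2*(g2 x)^2 + 2*g1 x*g3 x - 4*A*g2 x with hN2def
  have HN1 : ∀ x ∈ v, HasDerivAt N (N1 x) x := by
    intro x hx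
    have h := ((Hg1 x hx).pow 2).sub ((Hf x hx).const_mul (4*A))
    refine h.congr_deriv ?_
    show _ = 2*g1 x*g2 x - 4*A*g1 x
    push_cast
    try ring
  have HN2 : ∀ x ∈ v, HasDerivAt N1 (N2 x) x := by
    intro x hx
    have h := (((Hg1 x hx).mul (Hg2 x hx)).const_mul 2).sub ((Hg1 x hx).const_mul (4*A))
    convert h using 1
    · ext y; simp only [hN1def]
    · rfl
    · ext y; show 2*g1 y*g2 y - 4*A*g1 y = 2*(g1 y*g2 y) - 4*A*g1 y; ring
    · show 2*(g2 x)^2 + 2*g1 x*g3 x - 4*A*g2 x = _; ring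
  -- Step A : N2 / (6 (x-xm)) → 8 A B
  have StepA : Filter.Tendsto (fun x => N2 x / (6*(x - xm))) (𝓝[≠] xm) (𝓝 (8*A*B)) := by
    have t1 : Filter.Tendsto (fun x => (2*(g2 x + 2*A)*((g2 x - 2*A)/(x-xm))
        + 2*(g1 x/(x-xm))*g3 x - 4*A*((g2 x - 2*A)/(x-xm))) / 6) (𝓝[≠] xm)
        (𝓝 ((2*(2*A + 2*A)*(6*B) + 2*(2*A)*(6*B) - 4*A*(6*B))/6)) := by
      refine Filter.Tendsto.div_const ?_ 6
      refine Filter.Tendsto.sub (Filter.Tendsto.add ?_ ?_) ?_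
      · exact (tendsto_const_nhds.mul (((hg2cont.mono_left nhdsWithin_le_nhds).add
          tendsto_const_nhds))).mul H6B
      · exact (tendsto_const_nhds.mul H2A).mul (hg3cont.mono_left nhdsWithin_le_nhds)
      · exact tendsto_const_nhds.mul H6B
    rw [show (2*(2*A + 2*A)*(6*B) + 2*(2*A)*(6*B) - 4*A*(6*B))/6 = 8*A*B by ring] at t1
    refine t1.congr' ?_
    filter_upwards [htne] with x hx
    have ht : x - xm ≠ 0 := sub_ne_zero.mpr hx
    simp only [hN2def]
    field_simp
    ring
  -- Step B : N1 / (3 (x-xm)^2) → 8 A B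
  have StepB : Filter.Tendsto (fun x => N1 x / (3*(x - xm)^2)) (𝓝[≠] xm) (𝓝 (8*A*B)) := by
    apply HasDerivAt.lhopital_zero_nhdsNE (f' := N2) (g' := fun x => 6*(x - xm))
    · filter_upwards [hvmem'] with x hx using HN2 x hx
    · filter_upwards with x
      have h := (((hasDerivAt_id x).sub_const xm).pow 2).const_mul 3
      refine h.congr_deriv ?_
      simp only [id_eq]
      push_cast
      try ring
    · filter_upwards [htne] with x hx
      simpa [sub_eq_zero] using hx
    · have : Filter.Tendsto N1 (𝓝 xm) (𝓝 0) := by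
        have h := ((hg1cont.const_mul 2).mul hg2cont).sub (hg1cont.const_mul (4*A))
        simpa [hN1def] using h
      exact this.mono_left nhdsWithin_le_nhds
    · have : Filter.Tendsto (fun x : ℝ => 3*(x - xm)^2) (𝓝 xm) (𝓝 0) := by
        have := (by fun_prop : Continuous fun x : ℝ => 3*(x - xm)^2).tendsto xm
        simpa using this
      exact this.mono_left nhdsWithin_le_nhds
    · exact StepA
  -- Step C : N / (x-xm)^3 → 8 A B
  have HN3 : Filter.Tendsto (fun x => N x / (x - xm)^3) (𝓝[≠] xm) (𝓝 (8*A*B)) := by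
    apply HasDerivAt.lhopital_zero_nhdsNE (f' := N1) (g' := fun x => 3*(x - xm)^2)
    · filter_upwards [hvmem'] with x hx using HN1 x hx
    · filter_upwards with x
      have h := ((hasDerivAt_id x).sub_const xm).pow 3
      refine h.congr_deriv ?_
      simp only [id_eq]
      push_cast
      try ring
    · filter_upwards [htne] with x hx
      have ht : x - xm ≠ 0 := sub_ne_zero.mpr hx
      positivity
    · have : Filter.Tendsto N (𝓝 xm) (𝓝 0) := by
        have h := (hg1cont.pow 2).sub (hfcont.const_mul (4*A))
        simpa [hNdef] using h
      exact this.mono_left nhdsWithin_le_nhds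
    · have : Filter.Tendsto (fun x : ℝ => (x - xm)^3) (𝓝 xm) (𝓝 0) := by
        have := (by fun_prop : Continuous fun x : ℝ => (x - xm)^3).tendsto xm
        simpa using this
      exact this.mono_left nhdsWithin_le_nhds
    · exact StepB
  -- sqrt limit
  have hsq : Filter.Tendsto (fun x => Real.sqrt (f x / (x - xm)^2)) (𝓝[≠] xm)
      (𝓝 (Real.sqrt A)) := (Real.continuous_sqrt.tendsto A).comp hA1
  have hsa : Real.sqrt A * Real.sqrt A = A := Real.mul_self_sqrt hA.le
  constructor
  · -- left limit
    have hlL : 𝓝[<] xm ≤ 𝓝[≠] xm :=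
      nhdsWithin_mono _ (fun x hx => by simpa using ne_of_lt hx)
    have hsqL : Filter.Tendsto (fun x => Real.sqrt (f x) / (x - xm)) (𝓝[<] xm)
        (𝓝 (-Real.sqrt A)) := by
      have h := (hsq.mono_left hlL).neg
      refine h.congr' ?_
      filter_upwards [self_mem_nhdsWithin, hlL hfpos] with x hx hf
      have hx' : x < xm := hx
      rw [Real.sqrt_div hf.le, Real.sqrt_sq_eq_abs, abs_of_neg (by linarith : x - xm < 0)]
      rw [div_neg]
      ring
    have hQL : Filter.Tendsto (fun x => (-(g1 x) + 2*Real.sqrt A*Real.sqrt (f x))/(x-xm))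
        (𝓝[<] xm) (𝓝 (-(4*A))) := by
      have h := ((H2A.mono_left hlL).neg).add
        ((tendsto_const_nhds (x := 2*Real.sqrt A)).mul hsqL)
      rw [show -(2*A) + 2*Real.sqrt A*(-Real.sqrt A) = -(4*A) by linear_combination (-2 : ℝ) * hsa] at h
      refine h.congr fun x => by ring
    have := corrector_aux f g1 (fun x => -(g1 x) + 2*Real.sqrt A*Real.sqrt (f x))
      (fun x => -(g1 x) - 2*Real.sqrt A*Real.sqrt (f x)) xm A B hA (𝓝[<] xm) hlL hfpos
      (HN3.mono_left hlL) (hA1.mono_left hlL) hQL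
      (fun x hf => by
        have hsf : Real.sqrt (f x) * Real.sqrt (f x) = f x := Real.mul_self_sqrt hf.le
        linear_combination (-4*Real.sqrt (f x)*Real.sqrt (f x)) * hsa + (-4*A) * hsf)
    rw [show -B/(2*A) = -B / (2 * A) by ring] at this
    exact this
  · -- right limit
    have hlR : 𝓝[>] xm ≤ 𝓝[≠] xm :=
      nhdsWithin_mono _ (fun x hx => by simpa using ne_of_gt hx)
    have hsqR : Filter.Tendsto (fun x => Real.sqrt (f x) / (x - xm)) (𝓝[>] xm)
        (𝓝 (Real.sqrt A)) := by
      have h := hsq.mono_left hlR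
      refine h.congr' ?_
      filter_upwards [self_mem_nhdsWithin, hlR hfpos] with x hx hf
      have hx' : xm < x := hx
      rw [Real.sqrt_div hf.le, Real.sqrt_sq_eq_abs, abs_of_pos (by linarith : (0:ℝ) < x - xm)]
    have hQR : Filter.Tendsto (fun x => (-(g1 x) - 2*Real.sqrt A*Real.sqrt (f x))/(x-xm))
        (𝓝[>] xm) (𝓝 (-(4*A))) := by
      have h := ((H2A.mono_left hlR).neg).sub
        ((tendsto_const_nhds (x := 2*Real.sqrt A)).mul hsqR)
      rw [show -(2*A) - 2*Real.sqrt A*Real.sqrt A = -(4*A) by linear_combination (-2 : ℝ) * hsa] at h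
      refine h.congr fun x => by ring
    have := corrector_aux f g1 (fun x => -(g1 x) - 2*Real.sqrt A*Real.sqrt (f x))
      (fun x => -(g1 x) + 2*Real.sqrt A*Real.sqrt (f x)) xm A B hA (𝓝[>] xm) hlR hfpos
      (HN3.mono_left hlR) (hA1.mono_left hlR) hQR
      (fun x hf => by
        have hsf : Real.sqrt (f x) * Real.sqrt (f x) = f x := Real.mul_self_sqrt hf.le
        linear_combination (-4*Real.sqrt (f x)*Real.sqrt (f x)) * hsa + (-4*A) * hsf)
    exact this
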